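/- Let r₀ > 0, let c ∈ ℂ, let h : ℂ → ℂ be holomorphic on the open unit disk and continuous on the closed unit disk, and set f(z) = (1/2)·c·z̄ + h(z). If |f(z)| ≤ r₀ for every z with |z| = 1, then |c| ≤ 2r₀. In particular, if |c| = 3r₀ there is no such f whose boundary values on the unit circle all lie in the closed disk of radius r₀ centered at 0. -/

import Mathlib

open Complex Real Metric

lemma circleIntegral_conj : (∮ z in C((0:ℂ), 1), (starRingEnd ℂ) z) = 2 * Real.pi * I := by
  simp only [circleIntegral, deriv_circleMap, circleMap_zero, smul_eq_mul]
  have : ∀ θ : ℝ, (1 : ℝ) * Complex.exp (θ * I) * I * (starRingEnd ℂ) ((1:ℝ) * Complex.exp (θ * I)) = I := by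
    intro θ
    rw [map_mul, ← Complex.exp_conj]
    simp [mul_comm, mul_assoc, ← Complex.exp_add]
  simp only [this]
  simp [intervalIntegral.integral_const]


/-- If `h` is holomorphic on the open unit disk and continuous on the closed unit disk,
`f z = (1/2)·c·z̄ + h z`, and `|f z| ≤ r₀` for every `z` on the unit circle, then
`|c| ≤ 2·r₀`. -/
theorem abs_c_le_of_boundary_bound
    (r₀ : ℝ) (hr₀ : 0 < r₀) (c : ℂ) (h f : ℂ → ℂ)
    (hhol : DifferentiableOn ℂ h (Metric.ball (0 : ℂ) 1))
    (hcont : ContinuousOn h (Metric.closedBall (0 : ℂ) 1))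
    (hf : ∀ z : ℂ, f z = (1 / 2 : ℂ) * c * (starRingEnd ℂ) z + h z)
    (hbound : ∀ z : ℂ, ‖z‖ = 1 → ‖f z‖ ≤ r₀) :
    ‖c‖ ≤ 2 * r₀ := by
  have hint_h : (∮ z in C((0:ℂ), 1), h z) = 0 :=
    circleIntegral_eq_zero_of_differentiable_on_off_countable zero_le_one
      Set.countable_empty hcont (fun z hz => (hhol z hz.1).differentiableAt
        (Metric.isOpen_ball.mem_nhds hz.1))
  have hI1 : CircleIntegrable (fun z => (1 / 2 : ℂ) * c * (starRingEnd ℂ) z) 0 1 :=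
    (ContinuousOn.circleIntegrable zero_le_one
      (Continuous.continuousOn (by continuity)))
  have hI2 : CircleIntegrable h 0 1 :=
    ContinuousOn.circleIntegrable zero_le_one (hcont.mono sphere_subset_closedBall)
  have key : (∮ z in C((0:ℂ), 1), f z) = Real.pi * I * c := by
    have hIf : CircleIntegrable f 0 1 :=
      ContinuousOn.circleIntegrable zero_le_one
        (((Continuous.continuousOn (by continuity : Continuous fun z : ℂ =>
            (1 / 2 : ℂ) * c * (starRingEnd ℂ) z)).add
          (hcont.mono sphere_subset_closedBall)).congr fun z _ => hf z)
    have hsub : (∮ z in C((0:ℂ), 1), f z)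
        - (∮ z in C((0:ℂ), 1), (1 / 2 : ℂ) * c * (starRingEnd ℂ) z)
          = ∮ z in C((0:ℂ), 1), h z := by
      rw [← circleIntegral.integral_sub hIf hI1]
      refine circleIntegral.integral_congr zero_le_one fun z _ => ?_
      simp [Pi.sub_apply, hf z]
    have : (∮ z in C((0:ℂ), 1), f z)
        = (∮ z in C((0:ℂ), 1), (1 / 2 : ℂ) * c * (starRingEnd ℂ) z)
          + ∮ z in C((0:ℂ), 1), h z := by
      rw [← hsub]; ring
    rw [this, hint_h, add_zero]
    have := circleIntegral.integral_smul ((1 / 2 : ℂ) * c) (fun z => (starRingEnd ℂ) z) (0:ℂ) 1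
    simp only [smul_eq_mul] at this
    rw [this, circleIntegral_conj]
    ring
  have hb : ‖∮ z in C((0:ℂ), 1), f z‖ ≤ 2 * Real.pi * 1 * r₀ :=
    circleIntegral.norm_integral_le_of_norm_le_const zero_le_one fun z hz =>
      hbound z (by simpa using hz)
  rw [key] at hb
  have hpi : (0:ℝ) < Real.pi := Real.pi_pos
  have : Real.pi * ‖c‖ ≤ 2 * Real.pi * r₀ := by
    calc Real.pi * ‖c‖ = ‖(Real.pi : ℂ) * I * c‖ := by
          simp [norm_mul, Complex.norm_real, abs_of_pos hpi]
      _ ≤ 2 * Real.pi * 1 * r₀ := hb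
      _ = 2 * Real.pi * r₀ := by ring
  nlinarith
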